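/- Assume the nozzle geometry and the 2D CGO function, with s·ε ≤ 1, and let [T₁, T₂] ⊆ [0, T] with T₂ − T₁ = ε². Let θ ∈ (0, 1), A, B ≥ 0, (x₀, t₀) ∈ D̄_ε × [T₁, T₂], and let φ : D̄_ε × [T₁, T₂] → ℂ satisfy |φ(x₀, t₀)| ≤ A and |φ(x, t) − φ(x₀, t₀)| ≤ B·(‖x − x₀‖ + |t − t₀|^{1/2})^{θ} for all (x, t). Then there exists a constant C > 0 depending only on μ, λ and T such that |∫_{T₁}^{T₂}∫_{D_ε} φ(x, t)·u₀(x, t) dx dt| ≤ C·( A·ε^{2+l} + B·ε^{2+l+θ l₀} ). -/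

import Mathlib

noncomputable section

/-- Partial derivative in the first spatial variable. -/
def pd1 (f : ℝ → ℝ → ℝ → ℂ) (x₁ x₂ t : ℝ) : ℂ := deriv (fun y => f y x₂ t) x₁

/-- Partial derivative in the second spatial variable. -/
def pd2 (f : ℝ → ℝ → ℝ → ℂ) (x₁ x₂ t : ℝ) : ℂ := deriv (fun y => f x₁ y t) x₂

/-- Partial derivative in time. -/
def pdt (f : ℝ → ℝ → ℝ → ℂ) (x₁ x₂ t : ℝ) : ℂ := deriv (fun τ => f x₁ x₂ τ) t

/-- Spatial Laplacian `Δ = ∂₁² + ∂₂²`. -/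
def lap (f : ℝ → ℝ → ℝ → ℂ) (x₁ x₂ t : ℝ) : ℂ :=
  pd1 (pd1 f) x₁ x₂ t + pd2 (pd2 f) x₁ x₂ t

/-- The 2D complex geometric optics function
`u₀(x,t) = exp(μ^{-1/2}((s d₁ + i√(s²+λ) d₂) x₁ + (s d₂ − i√(s²+λ) d₁) x₂) + λ t)`. -/
def cgo2 (μ lam s d₁ d₂ : ℝ) (x₁ x₂ t : ℝ) : ℂ :=
  Complex.exp (((Real.sqrt μ : ℝ) : ℂ)⁻¹ *
      (((s : ℂ) * (d₁ : ℂ) + Complex.I * ((Real.sqrt (s ^ 2 + lam) : ℝ) : ℂ) * (d₂ : ℂ)) *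
          (x₁ : ℂ) +
        ((s : ℂ) * (d₂ : ℂ) - Complex.I * ((Real.sqrt (s ^ 2 + lam) : ℝ) : ℂ) * (d₁ : ℂ)) *
          (x₂ : ℂ)) +
    (lam : ℂ) * (t : ℂ))

/-- The parabolic distance `ρ = ‖x − y‖ + |t − τ|^{1/2}` in two space dimensions. -/
def prho (x₁ x₂ t y₁ y₂ τ : ℝ) : ℝ :=
  Real.sqrt ((x₁ - y₁) ^ 2 + (x₂ - y₂) ^ 2) + Real.sqrt |t - τ|

/-- Euclidean norm of the spatial gradient of `w`. -/
def gradNorm (w : ℝ → ℝ → ℝ → ℂ) (x₁ x₂ t : ℝ) : ℝ :=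
  Real.sqrt (‖pd1 w x₁ x₂ t‖ ^ 2 + ‖pd2 w x₁ x₂ t‖ ^ 2)

/-- The closed nozzle space–time cylinder
`D̄_ε × [T₁,T₂]`, `D_ε = {0 ≤ x₁ ≤ ε^l, γ(x₁) ≤ x₂ ≤ γ(x₁)+ε}`. -/
def nozzleCyl (ε l T₁ T₂ : ℝ) (γ : ℝ → ℝ) : Set (ℝ × ℝ × ℝ) :=
  {p : ℝ × ℝ × ℝ | p.1 ∈ Set.Icc 0 (ε ^ l) ∧ p.2.1 ∈ Set.Icc (γ p.1) (γ p.1 + ε) ∧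
    p.2.2 ∈ Set.Icc T₁ T₂}

/-- Parabolic `C^{1,α}` bound with constant `C` on the set `S`. -/
structure ParabolicC1 (w : ℝ → ℝ → ℝ → ℂ) (S : Set (ℝ × ℝ × ℝ)) (C α : ℝ) : Prop where
  bdd : ∀ p ∈ S, ‖w p.1 p.2.1 p.2.2‖ ≤ C
  grad_bdd : ∀ p ∈ S, gradNorm w p.1 p.2.1 p.2.2 ≤ C
  time_bdd : ∀ p ∈ S, ‖pdt w p.1 p.2.1 p.2.2‖ ≤ C
  lip : ∀ p ∈ S, ∀ q ∈ S,
    ‖w p.1 p.2.1 p.2.2 - w q.1 q.2.1 q.2.2‖ ≤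
      C * prho p.1 p.2.1 p.2.2 q.1 q.2.1 q.2.2
  grad_holder : ∀ p ∈ S, ∀ q ∈ S,
    Real.sqrt (‖pd1 w p.1 p.2.1 p.2.2 - pd1 w q.1 q.2.1 q.2.2‖ ^ 2 +
        ‖pd2 w p.1 p.2.1 p.2.2 - pd2 w q.1 q.2.1 q.2.2‖ ^ 2) ≤
      C * prho p.1 p.2.1 p.2.2 q.1 q.2.1 q.2.2 ^ α
  taylor : ∀ p ∈ S, ∀ q ∈ S,
    ‖w p.1 p.2.1 p.2.2 - w q.1 q.2.1 q.2.2
        - pd1 w q.1 q.2.1 q.2.2 * ((p.1 - q.1 : ℝ) : ℂ)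
        - pd2 w q.1 q.2.1 q.2.2 * ((p.2.1 - q.2.1 : ℝ) : ℂ)
        - pdt w q.1 q.2.1 q.2.2 * ((p.2.2 - q.2.2 : ℝ) : ℂ)‖ ≤
      C * prho p.1 p.2.1 p.2.2 q.1 q.2.1 q.2.2 ^ (1 + α)

/-- `w` is (jointly) continuously differentiable in `(x,t)` on the set `S`. -/
structure SmoothC1 (w : ℝ → ℝ → ℝ → ℂ) (S : Set (ℝ × ℝ × ℝ)) : Prop where
  cont : ContinuousOn (fun p : ℝ × ℝ × ℝ => w p.1 p.2.1 p.2.2) S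
  jdiff : ∀ p ∈ S, DifferentiableAt ℝ (fun q : ℝ × ℝ × ℝ => w q.1 q.2.1 q.2.2) p
  cont1 : ContinuousOn (fun p : ℝ × ℝ × ℝ => pd1 w p.1 p.2.1 p.2.2) S
  cont2 : ContinuousOn (fun p : ℝ × ℝ × ℝ => pd2 w p.1 p.2.1 p.2.2) S
  contt : ContinuousOn (fun p : ℝ × ℝ × ℝ => pdt w p.1 p.2.1 p.2.2) S

set_option maxHeartbeats 1000000 in
/-- **Volume-term estimate (Lemma 3.6).**
If `|φ(x₀,t₀)| ≤ A` and `φ` is `θ`-Hölder (constant `B`) with respect to the parabolic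
distance to the base point `(x₀, t₀) ∈ D̄_ε × [T₁,T₂]`, then
`|∫_{T₁}^{T₂} ∫_{D_ε} φ u₀| ≤ C (A ε^{2+l} + B ε^{2+l+θl₀})`,
with `C` depending only on `μ, λ, T`. -/
theorem volume_term_estimate_I3
    (μ lam T : ℝ) (hμ : 0 < μ) (hlam : 0 < lam) (hT : 0 < T) :
    ∃ C > 0, ∀ (ε l s d₁ d₂ T₁ T₂ θ A B x₀₁ x₀₂ t₀ : ℝ) (γ : ℝ → ℝ) (φ : ℝ → ℝ → ℝ → ℂ),
      ε ∈ Set.Ioo (0:ℝ) 1 → 0 < l →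
      ContDiffOn ℝ 2 γ (Set.Icc 0 (ε ^ l)) → γ 0 = 0 →
      derivWithin γ (Set.Icc 0 (ε ^ l)) 0 = 0 →
      (∀ x ∈ Set.Icc (0:ℝ) (ε ^ l), |γ x| ≤ ε) →
      d₁ < 0 → d₂ < 0 → d₁ ^ 2 + d₂ ^ 2 = 1 →
      0 < s → s * ε ≤ 1 →
      0 ≤ T₁ → T₂ ≤ T → T₂ - T₁ = ε ^ 2 →
      θ ∈ Set.Ioo (0:ℝ) 1 → 0 ≤ A → 0 ≤ B →
      (x₀₁, x₀₂, t₀) ∈ nozzleCyl ε l T₁ T₂ γ →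
      ‖φ x₀₁ x₀₂ t₀‖ ≤ A →
      (∀ p ∈ nozzleCyl ε l T₁ T₂ γ,
        ‖φ p.1 p.2.1 p.2.2 - φ x₀₁ x₀₂ t₀‖
          ≤ B * (Real.sqrt ((p.1 - x₀₁) ^ 2 + (p.2.1 - x₀₂) ^ 2)
              + Real.sqrt |p.2.2 - t₀|) ^ θ) →
      ‖∫ t in T₁..T₂, ∫ x₁ in (0:ℝ)..(ε ^ l), ∫ x₂ in (γ x₁)..(γ x₁ + ε),
            (φ x₁ x₂ t * cgo2 μ lam s d₁ d₂ x₁ x₂ t)‖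
        ≤ C * (A * ε ^ (2 + l) + B * ε ^ (2 + l + θ * min l 1)) := by
  refine ⟨5 * Real.exp ((Real.sqrt μ)⁻¹ + lam * T), by positivity, ?_⟩
  intro ε l s d₁ d₂ T₁ T₂ θ A B x₀₁ x₀₂ t₀ γ φ hε hl _ _ _ hγb hd₁ hd₂ hd hs hsε hT₁ hT₂ hTT hθ hA hB hx₀ hφ0 hφH
  obtain ⟨hε0, hε1⟩ := hε
  obtain ⟨hθ0, hθ1⟩ := hθ
  set M := Real.exp ((Real.sqrt μ)⁻¹ + lam * T) with hM
  have hM0 : 0 < M := Real.exp_pos _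
  set l₀ := min l 1 with hl₀
  have hl₀l : l₀ ≤ l := min_le_left _ _
  have hl₀1 : l₀ ≤ 1 := min_le_right _ _
  have hεl0 : 0 < ε ^ l := Real.rpow_pos_of_pos hε0 l
  have hε2 : (0:ℝ) < ε ^ (2:ℕ) := by positivity
  have hT₁₂ : T₁ < T₂ := by linarith
  have hsqμ : 0 < Real.sqrt μ := Real.sqrt_pos.2 hμ
  have hd₂1 : -1 ≤ d₂ := by nlinarith [sq_nonneg (d₂ + 1), sq_nonneg d₁]
  -- ε ≤ ε^l₀ and ε^l ≤ ε^l₀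
  have hεle : ε ≤ ε ^ l₀ := by
    calc ε = ε ^ (1:ℝ) := (Real.rpow_one ε).symm
    _ ≤ ε ^ l₀ := Real.rpow_le_rpow_of_exponent_ge hε0 hε1.le hl₀1
  have hεlle : ε ^ l ≤ ε ^ l₀ := Real.rpow_le_rpow_of_exponent_ge hε0 hε1.le hl₀l
  have hεl₀0 : (0:ℝ) < ε ^ l₀ := Real.rpow_pos_of_pos hε0 l₀
  -- bound on u₀ on the cylinder
  have hu : ∀ p ∈ nozzleCyl ε l T₁ T₂ γ, ‖cgo2 μ lam s d₁ d₂ p.1 p.2.1 p.2.2‖ ≤ M := by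
    rintro ⟨x₁, x₂, t⟩ ⟨hx₁, hx₂, ht⟩
    rw [cgo2, Complex.norm_exp, hM]
    apply Real.exp_le_exp.2
    have hre : (((Real.sqrt μ : ℝ) : ℂ)⁻¹ *
      (((s : ℂ) * (d₁ : ℂ) + Complex.I * ((Real.sqrt (s ^ 2 + lam) : ℝ) : ℂ) * (d₂ : ℂ)) *
          (x₁ : ℂ) +
        ((s : ℂ) * (d₂ : ℂ) - Complex.I * ((Real.sqrt (s ^ 2 + lam) : ℝ) : ℂ) * (d₁ : ℂ)) *
          (x₂ : ℂ)) +
      (lam : ℂ) * (t : ℂ)).re = (Real.sqrt μ)⁻¹ * (s * d₁ * x₁ + s * d₂ * x₂) + lam * t := by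
      rw [← Complex.ofReal_inv]
      simp [Complex.add_re, Complex.mul_re, Complex.mul_im]
    rw [hre]
    clear hre
    have hγx : -ε ≤ γ x₁ := by
      have := hγb x₁ hx₁
      have := abs_le.1 this
      linarith [this.1]
    have hx₂l : -ε ≤ x₂ := le_trans hγx hx₂.1
    have hx₁0 : (0:ℝ) ≤ x₁ := hx₁.1
    have h1 : s * d₁ * x₁ ≤ 0 := by
      nlinarith [mul_nonneg (mul_pos hs (neg_pos.2 hd₁)).le hx₁0]
    have h2 : s * d₂ * x₂ ≤ 1 := by
      have ha : 0 ≤ s * -d₂ * (x₂ + ε) :=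
        mul_nonneg (mul_pos hs (neg_pos.2 hd₂)).le (by linarith : (0:ℝ) ≤ x₂ + ε)
      have hb : s * ε * -d₂ ≤ s * ε * 1 :=
        mul_le_mul_of_nonneg_left (by linarith : -d₂ ≤ 1) (by positivity : (0:ℝ) ≤ s * ε)
      nlinarith [ha, hb]
    have h3 : 0 ≤ (Real.sqrt μ)⁻¹ := by positivity
    have h4 : lam * t ≤ lam * T :=
      mul_le_mul_of_nonneg_left (le_trans ht.2 hT₂) hlam.le
    have h5 : (Real.sqrt μ)⁻¹ * (s * d₁ * x₁ + s * d₂ * x₂) ≤ (Real.sqrt μ)⁻¹ * 1 :=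
      mul_le_mul_of_nonneg_left (by linarith) h3
    linarith
  -- bound on φ on the cylinder
  have hφ : ∀ p ∈ nozzleCyl ε l T₁ T₂ γ,
      ‖φ p.1 p.2.1 p.2.2‖ ≤ A + 5 * B * ε ^ (θ * l₀) := by
    rintro ⟨x₁, x₂, t⟩ hp
    have hρθ := hφH _ hp
    obtain ⟨hx₁, hx₂, ht⟩ := hp
    obtain ⟨hx₀₁, hx₀₂, ht₀⟩ := hx₀
    -- bound ρ ≤ 5 ε^l₀
    have hb1 : |x₁ - x₀₁| ≤ ε ^ l := by
      rw [abs_le]; constructor <;> [linarith [hx₁.2, hx₀₁.1, hx₁.1, hx₀₁.2]; linarith [hx₁.2, hx₀₁.1]]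
    have hγ1 := abs_le.1 (hγb x₁ hx₁)
    have hγ2 := abs_le.1 (hγb x₀₁ hx₀₁)
    have hb2 : |x₂ - x₀₂| ≤ 3 * ε := by
      rw [abs_le]
      constructor <;> [linarith [hx₂.1, hx₀₂.2]; linarith [hx₂.2, hx₀₂.1]]
    have hsq : Real.sqrt ((x₁ - x₀₁) ^ 2 + (x₂ - x₀₂) ^ 2) ≤ |x₁ - x₀₁| + |x₂ - x₀₂| := by
      rw [show |x₁ - x₀₁| + |x₂ - x₀₂| = Real.sqrt ((|x₁ - x₀₁| + |x₂ - x₀₂|) ^ 2) from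
        (Real.sqrt_sq (by positivity)).symm]
      apply Real.sqrt_le_sqrt
      nlinarith [abs_nonneg (x₁ - x₀₁), abs_nonneg (x₂ - x₀₂), sq_abs (x₁ - x₀₁), sq_abs (x₂ - x₀₂),
        mul_nonneg (abs_nonneg (x₁ - x₀₁)) (abs_nonneg (x₂ - x₀₂))]
    have hbt : Real.sqrt |t - t₀| ≤ ε := by
      rw [show ε = Real.sqrt (ε ^ 2) from (Real.sqrt_sq hε0.le).symm]
      apply Real.sqrt_le_sqrt
      rw [abs_le]
      constructor <;> [linarith [ht.1, ht₀.2]; linarith [ht.2, ht₀.1]]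
    have hρ : Real.sqrt ((x₁ - x₀₁) ^ 2 + (x₂ - x₀₂) ^ 2) + Real.sqrt |t - t₀|
        ≤ 5 * ε ^ l₀ := by
      calc Real.sqrt ((x₁ - x₀₁) ^ 2 + (x₂ - x₀₂) ^ 2) + Real.sqrt |t - t₀|
          ≤ (|x₁ - x₀₁| + |x₂ - x₀₂|) + ε := add_le_add hsq hbt
        _ ≤ (ε ^ l + 3 * ε) + ε := by linarith
        _ ≤ 5 * ε ^ l₀ := by linarith
    have hρnn : 0 ≤ Real.sqrt ((x₁ - x₀₁) ^ 2 + (x₂ - x₀₂) ^ 2) + Real.sqrt |t - t₀| := by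
      positivity
    have hpow : (Real.sqrt ((x₁ - x₀₁) ^ 2 + (x₂ - x₀₂) ^ 2) + Real.sqrt |t - t₀|) ^ θ
        ≤ 5 * ε ^ (θ * l₀) := by
      calc (Real.sqrt ((x₁ - x₀₁) ^ 2 + (x₂ - x₀₂) ^ 2) + Real.sqrt |t - t₀|) ^ θ
          ≤ (5 * ε ^ l₀) ^ θ := Real.rpow_le_rpow hρnn hρ hθ0.le
        _ = 5 ^ θ * (ε ^ l₀) ^ θ := Real.mul_rpow (by norm_num) hεl₀0.le
        _ = 5 ^ θ * ε ^ (θ * l₀) := by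
            rw [← Real.rpow_mul hε0.le, mul_comm l₀ θ]
        _ ≤ 5 * ε ^ (θ * l₀) := by
            have h5 : (5:ℝ) ^ θ ≤ 5 := by
              calc (5:ℝ) ^ θ ≤ (5:ℝ) ^ (1:ℝ) :=
                Real.rpow_le_rpow_of_exponent_le (by norm_num) hθ1.le
              _ = 5 := Real.rpow_one 5
            have : (0:ℝ) ≤ ε ^ (θ * l₀) := (Real.rpow_pos_of_pos hε0 _).le
            nlinarith
    calc ‖φ x₁ x₂ t‖ ≤ ‖φ x₀₁ x₀₂ t₀‖ + ‖φ x₁ x₂ t - φ x₀₁ x₀₂ t₀‖ := by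
          have := norm_sub_norm_le (φ x₁ x₂ t) (φ x₀₁ x₀₂ t₀)
          linarith [norm_sub_rev (φ x₁ x₂ t) (φ x₀₁ x₀₂ t₀) ▸ this,
            norm_add_le (φ x₀₁ x₀₂ t₀) (φ x₁ x₂ t - φ x₀₁ x₀₂ t₀),
            congrArg norm (add_sub_cancel (φ x₀₁ x₀₂ t₀) (φ x₁ x₂ t))]
      _ ≤ A + B * (Real.sqrt ((x₁ - x₀₁) ^ 2 + (x₂ - x₀₂) ^ 2) + Real.sqrt |t - t₀|) ^ θ := by
          exact add_le_add hφ0 hρθ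
      _ ≤ A + 5 * B * ε ^ (θ * l₀) := by nlinarith
  set K := A + 5 * B * ε ^ (θ * l₀) with hK
  have hK0 : 0 ≤ K := by positivity
  -- pointwise bound on the integrand
  have hpt : ∀ p ∈ nozzleCyl ε l T₁ T₂ γ,
      ‖φ p.1 p.2.1 p.2.2 * cgo2 μ lam s d₁ d₂ p.1 p.2.1 p.2.2‖ ≤ K * M := by
    intro p hp
    rw [norm_mul]
    exact mul_le_mul (hφ p hp) (hu p hp) (norm_nonneg _) hK0
  -- levelwise integral bounds
  have hout : ‖∫ t in T₁..T₂, ∫ x₁ in (0:ℝ)..(ε ^ l), ∫ x₂ in (γ x₁)..(γ x₁ + ε),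
      (φ x₁ x₂ t * cgo2 μ lam s d₁ d₂ x₁ x₂ t)‖ ≤ K * M * ε * ε ^ l * |T₂ - T₁| := by
    apply intervalIntegral.norm_integral_le_of_norm_le_const
    intro t ht
    rw [Set.uIoc_of_le hT₁₂.le] at ht
    have hmid : ‖∫ x₁ in (0:ℝ)..(ε ^ l), ∫ x₂ in (γ x₁)..(γ x₁ + ε),
        (φ x₁ x₂ t * cgo2 μ lam s d₁ d₂ x₁ x₂ t)‖ ≤ (K * M * ε) * |ε ^ l - 0| := by
      apply intervalIntegral.norm_integral_le_of_norm_le_const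
      intro x₁ hx₁
      rw [Set.uIoc_of_le hεl0.le] at hx₁
      have hin : ‖∫ x₂ in (γ x₁)..(γ x₁ + ε),
          (φ x₁ x₂ t * cgo2 μ lam s d₁ d₂ x₁ x₂ t)‖ ≤ (K * M) * |γ x₁ + ε - γ x₁| := by
        apply intervalIntegral.norm_integral_le_of_norm_le_const
        intro x₂ hx₂
        rw [Set.uIoc_of_le (by linarith : γ x₁ ≤ γ x₁ + ε)] at hx₂
        exact hpt (x₁, x₂, t) ⟨⟨hx₁.1.le, hx₁.2⟩,
          ⟨hx₂.1.le, hx₂.2⟩, ⟨ht.1.le, ht.2⟩⟩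
      calc ‖∫ x₂ in (γ x₁)..(γ x₁ + ε),
          (φ x₁ x₂ t * cgo2 μ lam s d₁ d₂ x₁ x₂ t)‖ ≤ (K * M) * |γ x₁ + ε - γ x₁| := hin
        _ = K * M * ε := by rw [show γ x₁ + ε - γ x₁ = ε by ring, abs_of_pos hε0]
    calc ‖∫ x₁ in (0:ℝ)..(ε ^ l), ∫ x₂ in (γ x₁)..(γ x₁ + ε),
        (φ x₁ x₂ t * cgo2 μ lam s d₁ d₂ x₁ x₂ t)‖ ≤ (K * M * ε) * |ε ^ l - 0| := hmid
      _ = K * M * ε * ε ^ l := by rw [sub_zero, abs_of_pos hεl0]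
  have habsT : |T₂ - T₁| = ε ^ (2:ℕ) := by rw [hTT, abs_of_pos hε2]
  rw [habsT] at hout
  refine le_trans hout ?_
  -- arithmetic of powers
  have h3l : ε ^ ((3:ℝ) + l) = ε ^ (3:ℕ) * ε ^ l := by
    rw [show (3:ℝ) + l = ((3:ℕ):ℝ) + l by norm_num, Real.rpow_add hε0, Real.rpow_natCast]
  have e1 : ε * ε ^ l * ε ^ (2:ℕ) ≤ ε ^ (2 + l) := by
    calc ε * ε ^ l * ε ^ (2:ℕ) = ε ^ (3:ℕ) * ε ^ l := by ring
      _ = ε ^ ((3:ℝ) + l) := h3l.symm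
      _ ≤ ε ^ (2 + l) := Real.rpow_le_rpow_of_exponent_ge hε0 hε1.le (by linarith)
  have e2 : ε ^ (θ * l₀) * (ε * ε ^ l * ε ^ (2:ℕ)) ≤ ε ^ (2 + l + θ * l₀) := by
    have h3lt : ε ^ ((3:ℝ) + l + θ * l₀) = ε ^ (3:ℕ) * ε ^ l * ε ^ (θ * l₀) := by
      rw [Real.rpow_add hε0, h3l]
    calc ε ^ (θ * l₀) * (ε * ε ^ l * ε ^ (2:ℕ)) = ε ^ (3:ℕ) * ε ^ l * ε ^ (θ * l₀) := by ring
      _ = ε ^ ((3:ℝ) + l + θ * l₀) := h3lt.symm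
      _ ≤ ε ^ (2 + l + θ * l₀) := Real.rpow_le_rpow_of_exponent_ge hε0 hε1.le (by linarith)
  have hεp1 : (0:ℝ) ≤ ε ^ (2 + l) := (Real.rpow_pos_of_pos hε0 _).le
  have hεp2 : (0:ℝ) ≤ ε ^ (2 + l + θ * l₀) := (Real.rpow_pos_of_pos hε0 _).le
  calc K * M * ε * ε ^ l * ε ^ (2:ℕ)
      = A * M * (ε * ε ^ l * ε ^ (2:ℕ))
        + 5 * B * M * (ε ^ (θ * l₀) * (ε * ε ^ l * ε ^ (2:ℕ))) := by rw [hK]; ring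
    _ ≤ A * M * ε ^ (2 + l) + 5 * B * M * ε ^ (2 + l + θ * l₀) := by
        have g1 := mul_le_mul_of_nonneg_left e1 (by positivity : (0:ℝ) ≤ A * M)
        have g2 := mul_le_mul_of_nonneg_left e2 (by positivity : (0:ℝ) ≤ 5 * B * M)
        linarith
    _ ≤ 5 * M * (A * ε ^ (2 + l) + B * ε ^ (2 + l + θ * min l 1)) := by
        rw [← hl₀]; nlinarith [mul_nonneg hA hεp1, hM0.le]
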